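/- Suppose Assumption (A) holds, r(n−1) < (3/7)(1 − 1/α), r(n−1) < (3/7)(1 − 1/β), and r(n−1) ≤ 1/10. Then the cone Ψ is contracting-invariant for {A_L, A_R}, i.e. A v ∈ int(Ψ) ∪ {0} for every v ∈ Ψ and every A ∈ {A_L, A_R}. -/

import Mathlib

open Matrix Polynomial Finset

noncomputable section

/-- The companion-type matrix of the `n`-dimensional border-collision normal form:
`(i,1)` entry is `-a i`, `(i,i+1)` entries are `1`, all other entries `0`. -/
def bcMat (n : ℕ) (a : Fin n → ℝ) : Matrix (Fin n) (Fin n) ℝ :=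
  Matrix.of fun i j =>
    (if (j : ℕ) = 0 then -a i else 0) + (if (j : ℕ) = (i : ℕ) + 1 then 1 else 0)

/-- The vector `b = (1,0,…,0)`. -/
def bcVec (n : ℕ) : Fin n → ℝ := fun i => if (i : ℕ) = 0 then 1 else 0

/-- `ρ` is an eigenvalue of `M` (of algebraic multiplicity one, automatic when `|ρ| > r`)
and all remaining eigenvalues of `M` over `ℂ`, counted with multiplicity,
have modulus at most `r`. -/
def specA (n : ℕ) (M : Matrix (Fin n) (Fin n) ℝ) (ρ r : ℝ) : Prop :=
  ∃ lam : Fin (n - 1) → ℂ,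
    (∀ j, ‖lam j‖ ≤ r) ∧
      M.charpoly.map (algebraMap ℝ ℂ) =
        (X - C (ρ : ℂ)) * ∏ j : Fin (n - 1), (X - C (lam j))

/-- Assumption (A). -/
def assumptionA (n : ℕ) (aL aR : Fin n → ℝ) (α β r : ℝ) : Prop :=
  1 < α ∧ 1 < β ∧ 0 < r ∧ r < 1 ∧
    specA n (bcMat n aL) α r ∧ specA n (bcMat n aR) (-β) r

/-- The border-collision normal form map `f`. -/
def bcf (n : ℕ) (aL aR : Fin n → ℝ) (x : Fin n → ℝ) : Fin n → ℝ :=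
  if ∀ i : Fin n, (i : ℕ) = 0 → x i ≤ 0 then (bcMat n aL).mulVec x + bcVec n
  else (bcMat n aR).mulVec x + bcVec n

/-- The fixed point `Y = (I − A_L)⁻¹ b`. -/
def Ypt (n : ℕ) (aL : Fin n → ℝ) : Fin n → ℝ :=
  ((1 - bcMat n aL)⁻¹).mulVec (bcVec n)

/-- The row vector `u = (α^{n-1}, …, α, 1)`. -/
def uvec (n : ℕ) (α : ℝ) : Fin n → ℝ := fun i => α ^ (n - 1 - (i : ℕ))

/-- The hyperplane `E = {x : uᵀ(x − Y) = 0}`. -/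
def Eset (n : ℕ) (aL : Fin n → ℝ) (α : ℝ) : Set (Fin n → ℝ) :=
  {x | ∑ i : Fin n, uvec n α i * (x i - Ypt n aL i) = 0}

/-- The slab `H = {x : |x_i| ≤ M_i r^{i-1}, i = 2,…,n}` with
`M_i = (2α/(α−1))·binom(n−1,i−1)`. -/
def Hset (n : ℕ) (α r : ℝ) : Set (Fin n → ℝ) :=
  {x | ∀ i : Fin n, 1 ≤ (i : ℕ) →
    |x i| ≤ 2 * α / (α - 1) * ((n - 1).choose (i : ℕ) : ℝ) * r ^ (i : ℕ)}

/-- The first component `C₁` of the point `C`. -/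
def Cfirst (n : ℕ) (aL aR : Fin n → ℝ) (α : ℝ) : ℝ :=
  (1 - 1 / (1 - bcMat n aL).det +
      1 / (1 - bcMat n aL).det *
        ∑ k ∈ univ.filter (fun k : Fin n => 1 ≤ (k : ℕ)),
          α ^ (-((k : ℕ) : ℤ)) *
            ∑ j ∈ univ.filter (fun j : Fin n => (k : ℕ) ≤ (j : ℕ)), aL j) /
    ∑ i : Fin n, α ^ (-((i : ℕ) : ℤ)) * aR i

/-- The point `C = (C₁, 0, …, 0)`. -/
def Cpt (n : ℕ) (aL aR : Fin n → ℝ) (α : ℝ) : Fin n → ℝ :=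
  fun i => if (i : ℕ) = 0 then Cfirst n aL aR α else 0

/-- The polytope `Ω = Conv({C} ∪ (E ∩ H))`. -/
def OmegaSet (n : ℕ) (aL aR : Fin n → ℝ) (α r : ℝ) : Set (Fin n → ℝ) :=
  convexHull ℝ ({Cpt n aL aR α} ∪ (Eset n aL α ∩ Hset n α r))

/-- The cone `Ψ` of scalar multiples of vectors `(1, m₁, …, m_{n-1})` with
`|m_i| ≤ N_i r^{i-1}`, `N_i = ((min(α,β)−1)/2)·binom(n−1,i−1)`. -/
def PsiSet (n : ℕ) (α β r : ℝ) : Set (Fin n → ℝ) :=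
  {x | ∃ γ : ℝ, ∃ v : Fin n → ℝ,
    (∀ i : Fin n, (i : ℕ) = 0 → v i = 1) ∧
    (∀ i : Fin n, 1 ≤ (i : ℕ) →
      |v i| ≤ (min α β - 1) / 2 * ((n - 1).choose ((i : ℕ) - 1) : ℝ) * r ^ ((i : ℕ) - 1)) ∧
    x = γ • v}

/-- `P` is the vertex `P^(s)`: the point of `E` whose `i`-th component, `i = 2,…,n`,
is `s_{i-1}·M_i r^{i-1}`. -/
def isVertexP (n : ℕ) (aL : Fin n → ℝ) (α r : ℝ) (s : Fin (n - 1) → ℝ)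
    (P : Fin n → ℝ) : Prop :=
  P ∈ Eset n aL α ∧
    ∀ i : Fin n, ∀ _h : 1 ≤ (i : ℕ),
      P i = s ⟨(i : ℕ) - 1, by have := i.isLt; omega⟩ *
        (2 * α / (α - 1) * ((n - 1).choose (i : ℕ) : ℝ) * r ^ (i : ℕ))

/-- The `k`-th elementary symmetric polynomial of `η`. -/
def esym {m : ℕ} (η : Fin m → ℂ) (k : ℕ) : ℂ :=
  ∑ t ∈ powersetCard k univ, ∏ j ∈ t, η j

end

section DetAux
variable {R : Type*} [CommRing R]

noncomputable def Tmat (n : ℕ) (d : Fin n → R) : Matrix (Fin n) (Fin n) R[X] :=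
  Matrix.of fun i j =>
    (if i = j then (X : R[X]) else 0) + (if (j : ℕ) = 0 then C (d i) else 0)
      - (if (j : ℕ) = (i : ℕ) + 1 then 1 else 0)

lemma det_Tmat : ∀ (n : ℕ) (d : Fin n → R),
    (Tmat n d).det = X ^ n + ∑ i : Fin n, C (d i) * X ^ (n - 1 - (i : ℕ)) := by
  intro n
  induction n with
  | zero => intro d; simp [Matrix.det_fin_zero]
  | succ n ih =>
    intro d
    rcases Nat.eq_zero_or_pos n with h0 | hpos
    · subst h0
      rw [show (Tmat 1 d).det = Tmat 1 d 0 0 from Matrix.det_fin_one _]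
      simp [Tmat]
    -- entries of the last row
    · have hE0 : Tmat (n + 1) d (Fin.last n) 0 = C (d (Fin.last n)) := by
        have h1 : (Fin.last n) ≠ (0 : Fin (n+1)) := by
          simp [Fin.ext_iff, Fin.val_last]; omega
        simp [Tmat, h1, Fin.val_last]
      have hElast : Tmat (n + 1) d (Fin.last n) (Fin.last n) = X := by
        simp [Tmat, Fin.val_last]; omega
      have hEother : ∀ j : Fin (n + 1), j ≠ 0 → j ≠ Fin.last n →
          Tmat (n + 1) d (Fin.last n) j = 0 := by
        intro j hj0 hjl
        have h1 : (Fin.last n) ≠ j := fun h => hjl h.symm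
        have h2 : (j : ℕ) ≠ 0 := fun h => hj0 (Fin.ext h)
        have h3 : (j : ℕ) ≠ n + 1 := by have := j.isLt; omega
        simp [Tmat, h1, h2, h3, hj0, Fin.val_last]
      -- the two minors
      have hminor0 : ((Tmat (n + 1) d).submatrix (Fin.last n).succAbove
          (0 : Fin (n + 1)).succAbove).det = (-1 : R[X]) ^ n := by
        have hbt : ((Tmat (n + 1) d).submatrix (Fin.last n).succAbove
            (0 : Fin (n + 1)).succAbove).BlockTriangular OrderDual.toDual := by
          intro i j hij
          have hij' : (i : ℕ) < (j : ℕ) := hij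
          have h1 : (Fin.castSucc i) ≠ (Fin.succ j) := by
            intro h
            have := congrArg Fin.val h
            simp only [Fin.coe_castSucc, Fin.val_succ] at this
            omega
          have h3 : ¬ ((j : ℕ) = (i : ℕ)) := by omega
          simp [Matrix.submatrix_apply, Fin.succAbove_last, Fin.succAbove_zero,
            Tmat, h1, h3]
        rw [Matrix.det_of_lowerTriangular _ hbt]
        have : ∀ i : Fin n, ((Tmat (n + 1) d).submatrix (Fin.last n).succAbove
            (0 : Fin (n + 1)).succAbove) i i = -1 := by
          intro i
          have h1 : (Fin.castSucc i) ≠ (Fin.succ i) := by simp [Fin.ext_iff]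
          have h2 : ((Fin.succ i : Fin (n+1)) : ℕ) ≠ 0 := by simp
          have h3 : ((Fin.succ i : Fin (n+1)) : ℕ) = ((Fin.castSucc i : Fin (n+1)) : ℕ) + 1 := by
            simp
          simp [Matrix.submatrix_apply, Fin.succAbove_last, Fin.succAbove_zero,
            Tmat, h1, h2, h3]
        rw [Finset.prod_congr rfl fun i _ => this i]
        simp
      have hminorlast : ((Tmat (n + 1) d).submatrix (Fin.last n).succAbove
          (Fin.last n).succAbove) = Tmat n (fun i => d i.castSucc) := by
        ext i j
        have h1 : (Fin.castSucc i = Fin.castSucc j) = (i = j) := by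
          simp [Fin.castSucc_inj]
        have h2 : (Fin.castSucc j = 0) = ((j : ℕ) = 0) := by
          simp [Fin.ext_iff]
        simp [Matrix.submatrix_apply, Fin.succAbove_last, Tmat, h1, h2]
      -- expand along the last row
      rw [Matrix.det_succ_row (Tmat (n + 1) d) (Fin.last n)]
      have hne0 : (0 : Fin (n + 1)) ≠ Fin.last n := by
        simp [Fin.ext_iff, Fin.val_last]; omega
      rw [← Finset.sum_subset (Finset.subset_univ ({0, Fin.last n} : Finset (Fin (n + 1))))
        (fun j _ hj => by
          have hj0 : j ≠ 0 := fun h => hj (by simp [h])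
          have hjl : j ≠ Fin.last n := fun h => hj (by simp [h])
          rw [hEother j hj0 hjl, mul_zero, zero_mul])]
      rw [Finset.sum_insert (by simp [hne0]), Finset.sum_singleton]
      rw [hE0, hElast, hminor0, hminorlast, ih]
      have hsign : ((-1 : R[X])) ^ ((Fin.last n : ℕ) + ((0 : Fin (n+1)) : ℕ)) * C (d (Fin.last n)) *
          (-1 : R[X]) ^ n = C (d (Fin.last n)) := by
        simp [Fin.val_last]
        rw [mul_comm, ← mul_assoc, ← pow_add]
        rw [Even.neg_one_pow ⟨n, by ring⟩, one_mul]
      rw [hsign]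
      have hsign2 : ((-1 : R[X])) ^ ((Fin.last n : ℕ) + ((Fin.last n : Fin (n+1)) : ℕ)) = 1 := by
        rw [Fin.val_last, Even.neg_one_pow ⟨n, by ring⟩]
      rw [hsign2, one_mul]
      -- algebra
      rw [Fin.sum_univ_castSucc (f := fun i : Fin (n + 1) => C (d i) * X ^ (n + 1 - 1 - (i : ℕ)))]
      have hlast : C (d (Fin.last n)) * X ^ (n + 1 - 1 - ((Fin.last n : Fin (n+1)) : ℕ)) =
          C (d (Fin.last n)) := by
        rw [Fin.val_last]; simp
      rw [hlast, mul_add, Finset.mul_sum]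
      have hterm : ∀ i : Fin n, X * (C (d i.castSucc) * X ^ (n - 1 - (i : ℕ))) =
          C (d i.castSucc) * X ^ (n + 1 - 1 - ((i.castSucc : Fin (n+1)) : ℕ)) := by
        intro i
        rw [Fin.coe_castSucc]
        have : n + 1 - 1 - (i : ℕ) = (n - 1 - (i : ℕ)) + 1 := by have := i.isLt; omega
        rw [this, pow_succ]; ring
      rw [Finset.sum_congr rfl fun i _ => hterm i]
      rw [← pow_succ']
      ring

end DetAux


lemma charmatrix_bcMat (n : ℕ) (a : Fin n → ℝ) :
    charmatrix (bcMat n a) = Tmat n a := by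
  ext i j
  rw [charmatrix_apply]
  simp only [Tmat, bcMat, Matrix.of_apply, Matrix.diagonal_apply, map_add, apply_ite C, map_neg,
    map_zero, C_1]
  split_ifs <;> ring

lemma charpoly_bcMat (n : ℕ) (a : Fin n → ℝ) :
    (bcMat n a).charpoly = X ^ n + ∑ i : Fin n, C (a i) * X ^ (n - 1 - (i : ℕ)) := by
  rw [Matrix.charpoly, charmatrix_bcMat, det_Tmat]

lemma mulVec_bcMat (n : ℕ) (hn : 0 < n) (a v : Fin n → ℝ) (i : Fin n) :
    (bcMat n a).mulVec v i =
      -a i * v ⟨0, hn⟩ + (if h : (i : ℕ) + 1 < n then v ⟨(i : ℕ) + 1, h⟩ else 0) := by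
  unfold Matrix.mulVec dotProduct
  simp only [bcMat, Matrix.of_apply, add_mul, ite_mul, zero_mul, one_mul]
  rw [Finset.sum_add_distrib]
  congr 1
  · rw [Finset.sum_eq_single (⟨0, hn⟩ : Fin n)]
    · simp
    · intro b _ hb
      rw [if_neg (by simpa [Fin.ext_iff] using hb)]
    · simp
  · split
    · next h =>
      rw [Finset.sum_eq_single (⟨(i : ℕ) + 1, h⟩ : Fin n)]
      · simp
      · intro b _ hb
        rw [if_neg (by simpa [Fin.ext_iff] using hb)]
      · simp
    · next h =>
      apply Finset.sum_eq_zero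
      intro b _
      rw [if_neg (by have := b.isLt; omega)]


lemma esym_zero {m : ℕ} (η : Fin m → ℂ) : esym η 0 = 1 := by
  simp [esym]

lemma esym_eq_zero {m : ℕ} (η : Fin m → ℂ) (k : ℕ) (hk : m < k) : esym η k = 0 := by
  unfold esym
  rw [Finset.powersetCard_eq_empty.2 (by simpa using hk), Finset.sum_empty]

lemma abs_esym_le {m : ℕ} (η : Fin m → ℂ) (r : ℝ) (hr : 0 ≤ r)
    (hη : ∀ j, ‖η j‖ ≤ r) (k : ℕ) :
    ‖esym η k‖ ≤ (m.choose k : ℝ) * r ^ k := by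
  unfold esym
  calc ‖∑ t ∈ powersetCard k univ, ∏ j ∈ t, η j‖
      ≤ ∑ t ∈ powersetCard k (univ : Finset (Fin m)), ‖∏ j ∈ t, η j‖ :=
        norm_sum_le _ _
    _ ≤ ∑ _t ∈ powersetCard k (univ : Finset (Fin m)), r ^ k := by
        apply Finset.sum_le_sum
        intro t ht
        rw [norm_prod]
        have hcard := (Finset.mem_powersetCard.mp ht).2
        calc ∏ j ∈ t, ‖η j‖ ≤ ∏ _j ∈ t, r :=
              Finset.prod_le_prod (fun _ _ => norm_nonneg _) (fun j _ => hη j)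
          _ = r ^ k := by rw [Finset.prod_const, hcard]
    _ = (m.choose k : ℝ) * r ^ k := by
        rw [Finset.sum_const, Finset.card_powersetCard, Finset.card_fin, nsmul_eq_mul]

lemma coeff_prod_X_sub_C {m : ℕ} (η : Fin m → ℂ) (k : ℕ) (hk : k ≤ m) :
    (∏ j : Fin m, (X - C (η j))).coeff (m - k) = (-1) ^ k * esym η k := by
  have hcard : Multiset.card (Multiset.map η (univ : Finset (Fin m)).val) = m := by simp
  have h1 : (∏ j : Fin m, (X - C (η j))) =
      ((Multiset.map η (univ : Finset (Fin m)).val).map (fun t => X - C t)).prod := by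
    rw [Multiset.map_map]
    rfl
  rw [h1, Multiset.prod_X_sub_C_coeff _ (by rw [hcard]; omega), hcard, Nat.sub_sub_self hk,
    Finset.esymm_map_val]
  rfl


lemma key_ineq (t μ s : ℝ) (ht : 0 < t) (hμ : 0 < μ) (hs : 1 + 2*μ ≤ s)
    (htb : 7 * (1 + 2*μ) * t < 6 * μ) :
    s*t + t^2 + μ*t < μ * (s - t - μ) := by
  have hμt : t < μ := by nlinarith
  nlinarith [mul_nonneg hμ.le (sq_nonneg (140*μ - 27)), sq_nonneg (2632*μ - 503),
    mul_pos hμ ht, mul_nonneg (sub_nonneg.2 hs) (sub_pos.2 hμt).le, sq_nonneg (t+μ), sq_nonneg (t-μ)]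


lemma coeff_formula (n : ℕ) (hn : 2 ≤ n) (a : Fin n → ℝ) (ρ : ℝ) (lam : Fin (n-1) → ℂ)
    (heq : (bcMat n a).charpoly.map (algebraMap ℝ ℂ) =
      (X - C (ρ:ℂ)) * ∏ j : Fin (n-1), (X - C (lam j))) (k : Fin n) :
    ((a k : ℂ)) = (-1)^((k:ℕ)+1) * esym lam ((k:ℕ)+1)
        + (-1)^((k:ℕ)+1) * (ρ:ℂ) * esym lam (k:ℕ) := by
  set Q : ℂ[X] := ∏ j : Fin (n-1), (X - C (lam j)) with hQ
  have hmap : (X:ℂ[X]) ^ n + ∑ i : Fin n, C ((a i : ℂ)) * X ^ (n - 1 - (i:ℕ))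
      = (X - C (ρ:ℂ)) * Q := by
    rw [← heq, charpoly_bcMat]
    simp [Polynomial.map_add, Polynomial.map_pow, Polynomial.map_sum, Polynomial.map_mul]
  have hL : ((X:ℂ[X]) ^ n + ∑ i : Fin n, C ((a i : ℂ)) * X ^ (n - 1 - (i:ℕ))).coeff (n-1-(k:ℕ))
      = (a k : ℂ) := by
    rw [coeff_add, coeff_X_pow, if_neg (by have := k.isLt; omega), finset_sum_coeff]
    simp only [coeff_C_mul, coeff_X_pow]
    rw [Finset.sum_eq_single k]
    · simp
    · intro b _ hb
      rw [if_neg (by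
        have hb' : (b:ℕ) ≠ (k:ℕ) := fun h => hb (Fin.ext h)
        have := b.isLt; have := k.isLt; omega), mul_zero]
    · simp
  have hmain := congrArg (fun p => p.coeff (n-1-(k:ℕ))) hmap
  simp only [hL] at hmain
  rw [sub_mul, coeff_sub, coeff_C_mul] at hmain
  rcases eq_or_lt_of_le (show (k:ℕ) ≤ n - 1 by have := k.isLt; omega) with hkk | hkk
  · -- k = n-1
    have h0 : n - 1 - (k:ℕ) = 0 := by omega
    have hQ0 : Q.coeff 0 = (-1)^(n-1) * esym lam (n-1) := by
      have := coeff_prod_X_sub_C lam (n-1) le_rfl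
      rwa [Nat.sub_self] at this
    rw [h0, mul_coeff_zero, coeff_X_zero, zero_mul, hQ0] at hmain
    rw [esym_eq_zero lam ((k:ℕ)+1) (by omega), hmain, hkk, pow_succ]
    ring
  · -- k < n-1
    have h1 : n - 1 - (k:ℕ) = (n - 1 - ((k:ℕ)+1)) + 1 := by omega
    have hXQ : (X * Q).coeff (n-1-(k:ℕ)) = (-1)^((k:ℕ)+1) * esym lam ((k:ℕ)+1) := by
      rw [h1, coeff_X_mul, ← coeff_prod_X_sub_C lam ((k:ℕ)+1) (by omega)]
    have hQk : Q.coeff (n-1-(k:ℕ)) = (-1)^(k:ℕ) * esym lam (k:ℕ) := by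
      rw [← coeff_prod_X_sub_C lam (k:ℕ) (by omega)]
    rw [hXQ, hQk] at hmain
    rw [hmain, pow_succ]
    ring


lemma choose_le_mul (N i : ℕ) (hi : 1 ≤ i) : N.choose i ≤ N * N.choose (i - 1) := by
  obtain ⟨j, rfl⟩ : ∃ j, i = j + 1 := ⟨i - 1, by omega⟩
  have h := Nat.choose_succ_right_eq N j
  calc N.choose (j+1) ≤ N.choose (j+1) * (j+1) := Nat.le_mul_of_pos_right _ (by omega)
    _ = N.choose j * (N - j) := h
    _ ≤ N.choose j * N := Nat.mul_le_mul_left _ (by omega)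
    _ = N * N.choose ((j+1) - 1) := by simp [Nat.mul_comm]

set_option maxHeartbeats 1000000 in
lemma cone_step (n : ℕ) (hn : 2 ≤ n) (a : Fin n → ℝ) (ρ r m : ℝ)
    (hr : 0 < r) (hm : 1 < m) (hmρ : m ≤ |ρ|)
    (hspec : specA n (bcMat n a) ρ r)
    (ht : r * ((n:ℝ) - 1) < 3/7 * (1 - 1/m))
    (w : Fin n → ℝ) (hw0 : ∀ i : Fin n, (i:ℕ) = 0 → w i = 1)
    (hwb : ∀ i : Fin n, 1 ≤ (i:ℕ) →
      |w i| ≤ (m - 1)/2 * (((n-1).choose ((i:ℕ)-1)) : ℝ) * r ^ ((i:ℕ)-1)) :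
    0 < |(bcMat n a).mulVec w ⟨0, by omega⟩| ∧
    ∀ i : Fin n, 1 ≤ (i:ℕ) →
      |(bcMat n a).mulVec w i| <
        (m - 1)/2 * (((n-1).choose ((i:ℕ)-1)) : ℝ) * r ^ ((i:ℕ)-1) *
          |(bcMat n a).mulVec w ⟨0, by omega⟩| := by
  obtain ⟨lam, hlam, heq⟩ := hspec
  have hform := coeff_formula n hn a ρ lam heq
  set μ : ℝ := (m-1)/2 with hμdef
  set t : ℝ := r * ((n:ℝ)-1) with htdef
  set s : ℝ := |ρ| with hsdef
  have hn1R : (((n-1:ℕ)):ℝ) = (n:ℝ) - 1 := by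
    rw [Nat.cast_sub (by omega), Nat.cast_one]
  have hs0 : (0:ℝ) ≤ s := abs_nonneg ρ
  have hμpos : 0 < μ := by rw [hμdef]; linarith
  have hnR : (2:ℝ) ≤ (n:ℝ) := by exact_mod_cast hn
  have ht0 : 0 < t := by rw [htdef]; apply mul_pos hr; linarith
  have hmeq : m = 1 + 2*μ := by rw [hμdef]; ring
  have htb : 7 * (1 + 2*μ) * t < 6 * μ := by
    have hm0 : (0:ℝ) < m := by linarith
    have h2 : 3/7*(1-1/m) = 3*(m-1)/(7*m) := by field_simp
    rw [h2, lt_div_iff₀ (by positivity)] at ht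
    nlinarith [ht]
  have h1p : 1 + 2*μ ≤ s := by rw [hmeq] at hmρ; exact hmρ
  have hkey := key_ineq t μ s ht0 hμpos h1p htb
  have htμ : t < μ := by nlinarith
  -- real coefficient bounds
  have habs : ∀ k : Fin n, |a k| ≤ s * (((n-1).choose (k:ℕ)) : ℝ) * r^(k:ℕ)
      + (((n-1).choose ((k:ℕ)+1)) : ℝ) * r^((k:ℕ)+1) := by
    intro k
    have h := hform k
    have h2 : ‖((a k : ℂ))‖ ≤
        s * (((n-1).choose (k:ℕ)) : ℝ) * r^(k:ℕ) + (((n-1).choose ((k:ℕ)+1)) : ℝ) * r^((k:ℕ)+1) := by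
      rw [h]
      refine le_trans (norm_add_le _ _) ?_
      have e1 : ‖(-1)^((k:ℕ)+1) * esym lam ((k:ℕ)+1)‖ = ‖esym lam ((k:ℕ)+1)‖ := by
        rw [norm_mul, norm_pow, norm_neg, norm_one, one_pow, one_mul]
      have e2 : ‖(-1)^((k:ℕ)+1) * (ρ:ℂ) * esym lam (k:ℕ)‖ = s * ‖esym lam (k:ℕ)‖ := by
        rw [norm_mul, norm_mul, norm_pow, norm_neg, norm_one, one_pow, one_mul, Complex.norm_real, Real.norm_eq_abs]
      rw [e1, e2]
      have b1 := abs_esym_le lam r hr.le hlam ((k:ℕ)+1)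
      have b2 := abs_esym_le lam r hr.le hlam (k:ℕ)
      have := mul_le_mul_of_nonneg_left b2 hs0
      linarith [this, b1]
    rwa [Complex.norm_real, Real.norm_eq_abs] at h2
  have ha0 : |a ⟨0, by omega⟩ + ρ| ≤ t := by
    have h := hform ⟨0, by omega⟩
    simp only [esym_zero, pow_one, mul_one] at h
    have h3 : ((a ⟨0, by omega⟩ + ρ : ℝ) : ℂ) = -(esym lam 1) := by
      push_cast
      rw [h]; ring
    have h4 : |a ⟨0, by omega⟩ + ρ| = ‖(((a ⟨0, by omega⟩ + ρ : ℝ) : ℂ))‖ := by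
      rw [Complex.norm_real, Real.norm_eq_abs]
    rw [h4, h3, norm_neg]
    refine le_trans (abs_esym_le lam r hr.le hlam 1) ?_
    rw [Nat.choose_one_right, pow_one, hn1R, htdef]
    linarith [mul_comm ((n:ℝ)-1) r]
  -- the zeroth component
  have h0n : 0 < n := by omega
  have hx0 : (bcMat n a).mulVec w ⟨0, h0n⟩ = -a ⟨0, h0n⟩ + w ⟨1, by omega⟩ := by
    rw [mulVec_bcMat n h0n a w ⟨0, h0n⟩, hw0 ⟨0, h0n⟩ rfl, mul_one,
      dif_pos (show ((⟨0, h0n⟩ : Fin n) : ℕ) + 1 < n from by show 0 + 1 < n; omega)]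
  have hw1 : |w ⟨1, by omega⟩| ≤ μ := by
    have h := hwb ⟨1, by omega⟩ (by norm_num)
    simpa using h
  have hlow : s - t - μ ≤ |(bcMat n a).mulVec w ⟨0, h0n⟩| := by
    have hρeq : ρ = (bcMat n a).mulVec w ⟨0, h0n⟩ + (a ⟨0, h0n⟩ + ρ) - w ⟨1, by omega⟩ := by
      rw [hx0]; ring
    have h1 : |ρ| ≤ |(bcMat n a).mulVec w ⟨0, h0n⟩ + (a ⟨0, h0n⟩ + ρ)| + |w ⟨1, by omega⟩| := by
      nth_rewrite 1 [hρeq]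
      exact abs_sub _ _
    have h2 : |(bcMat n a).mulVec w ⟨0, h0n⟩ + (a ⟨0, h0n⟩ + ρ)| ≤ |(bcMat n a).mulVec w ⟨0, h0n⟩| + |a ⟨0, h0n⟩ + ρ| :=
      abs_add_le _ _
    have := ha0
    linarith [h1, h2, ha0, hw1]
  have hlowpos : 0 < s - t - μ := by nlinarith
  have hxpos : 0 < |(bcMat n a).mulVec w ⟨0, h0n⟩| := lt_of_lt_of_le hlowpos hlow
  refine ⟨hxpos, ?_⟩
  intro i hi
  have hiub : (i:ℕ) ≤ n - 1 := by have := i.isLt; omega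
  have hKpos : (0:ℝ) < (((n-1).choose ((i:ℕ)-1)) : ℝ) := by
    exact_mod_cast Nat.choose_pos (show (i:ℕ)-1 ≤ n-1 by omega)
  set K : ℝ := (((n-1).choose ((i:ℕ)-1)) : ℝ) with hKdef
  have hcn1 : (((n-1).choose (i:ℕ)) : ℝ) ≤ (((n-1:ℕ)):ℝ) * K := by
    rw [hKdef]
    exact_mod_cast choose_le_mul (n-1) (i:ℕ) hi
  have hcn2 : (((n-1).choose ((i:ℕ)+1)) : ℝ) ≤ (((n-1:ℕ)):ℝ)^2 * K := by
    have s1 : (n-1).choose ((i:ℕ)+1) ≤ (n-1) * (n-1).choose (i:ℕ) := by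
      have := choose_le_mul (n-1) ((i:ℕ)+1) (by omega)
      simpa using this
    have s2 : (n-1) * (n-1).choose (i:ℕ) ≤ (n-1) * ((n-1) * (n-1).choose ((i:ℕ)-1)) :=
      Nat.mul_le_mul_left _ (choose_le_mul (n-1) (i:ℕ) hi)
    have : (n-1).choose ((i:ℕ)+1) ≤ (n-1) * ((n-1) * (n-1).choose ((i:ℕ)-1)) := le_trans s1 s2
    rw [hKdef]
    calc (((n-1).choose ((i:ℕ)+1)) : ℝ) ≤ (((n-1) * ((n-1) * (n-1).choose ((i:ℕ)-1)) : ℕ) : ℝ) := by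
          exact_mod_cast this
      _ = (((n-1:ℕ)):ℝ)^2 * (((n-1).choose ((i:ℕ)-1)) : ℝ) := by push_cast; ring
  have hrpow : r ^ (i:ℕ) = r^((i:ℕ)-1) * r := by
    rw [← pow_succ]; congr 1; omega
  have hrpow2 : r ^ ((i:ℕ)+1) = r^((i:ℕ)-1) * r * r := by
    rw [← pow_succ, ← pow_succ]; congr 1; omega
  have hrpos1 : (0:ℝ) < r^((i:ℕ)-1) := by positivity
  have hA : (((n-1).choose (i:ℕ)) : ℝ) * r^(i:ℕ) ≤ K * r^((i:ℕ)-1) * t := by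
    rw [hrpow]
    calc (((n-1).choose (i:ℕ)) : ℝ) * (r^((i:ℕ)-1) * r) ≤ ((((n-1):ℕ)):ℝ) * K * (r^((i:ℕ)-1) * r) :=
          mul_le_mul_of_nonneg_right hcn1 (by positivity)
      _ = K * r^((i:ℕ)-1) * t := by rw [hn1R, htdef]; ring
  have hB : (((n-1).choose ((i:ℕ)+1)) : ℝ) * r^((i:ℕ)+1) ≤ K * r^((i:ℕ)-1) * t^2 := by
    rw [hrpow2]
    calc (((n-1).choose ((i:ℕ)+1)) : ℝ) * (r^((i:ℕ)-1) * r * r)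
        ≤ ((((n-1):ℕ)):ℝ)^2 * K * (r^((i:ℕ)-1) * r * r) :=
          mul_le_mul_of_nonneg_right hcn2 (by positivity)
      _ = K * r^((i:ℕ)-1) * t^2 := by rw [hn1R, htdef]; ring
  -- value of component i
  have hxi : (bcMat n a).mulVec w i = -a i +
      (if h : (i:ℕ)+1 < n then w ⟨(i:ℕ)+1, h⟩ else 0) := by
    rw [mulVec_bcMat n (by omega) a w i, hw0 ⟨0, by omega⟩ rfl, mul_one]
  have hwn : |(if h : (i:ℕ)+1 < n then w ⟨(i:ℕ)+1, h⟩ else 0)| ≤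
      μ * (((n-1).choose (i:ℕ)) : ℝ) * r^(i:ℕ) := by
    split
    · next h =>
      have := hwb ⟨(i:ℕ)+1, h⟩ (by simp)
      simpa using this
    · next h =>
      rw [abs_zero]
      positivity
  have hxile : |(bcMat n a).mulVec w i| ≤ K * r^((i:ℕ)-1) * (s*t + t^2 + μ*t) := by
    rw [hxi]
    have step1 : |(-a i + (if h : (i:ℕ)+1 < n then w ⟨(i:ℕ)+1, h⟩ else 0))| ≤
        |a i| + |(if h : (i:ℕ)+1 < n then w ⟨(i:ℕ)+1, h⟩ else 0)| := by
      refine le_trans (abs_add_le _ _) ?_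
      rw [abs_neg]
    have hai := habs i
    have m1 := mul_le_mul_of_nonneg_left hA hs0
    have m2 := mul_le_mul_of_nonneg_left hA hμpos.le
    nlinarith [step1, hai, hwn, m1, m2, hB]
  calc |(bcMat n a).mulVec w i| ≤ K * r^((i:ℕ)-1) * (s*t + t^2 + μ*t) := hxile
    _ < K * r^((i:ℕ)-1) * (μ * (s - t - μ)) := by
        exact mul_lt_mul_of_pos_left hkey (by positivity)
    _ ≤ μ * K * r^((i:ℕ)-1) * |(bcMat n a).mulVec w ⟨0, h0n⟩| := by
        have := mul_le_mul_of_nonneg_left hlow (show (0:ℝ) ≤ μ * (K * r^((i:ℕ)-1)) by positivity)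
        nlinarith [this]
    _ = (m-1)/2 * K * r^((i:ℕ)-1) * |(bcMat n a).mulVec w ⟨0, h0n⟩| := by rw [← hμdef]


lemma mem_interior_PsiSet (n : ℕ) (hn : 2 ≤ n) (α β r : ℝ) (x : Fin n → ℝ)
    (hx : ∀ i : Fin n, 1 ≤ (i:ℕ) →
      |x i| < (min α β - 1)/2 * (((n-1).choose ((i:ℕ)-1)) : ℝ) * r^((i:ℕ)-1) *
        |x ⟨0, by omega⟩|) :
    x ∈ interior (PsiSet n α β r) := by
  have h0 : (0:ℕ) < n := by omega
  set c : Fin n → ℝ := fun i => (min α β - 1)/2 * (((n-1).choose ((i:ℕ)-1)) : ℝ) * r^((i:ℕ)-1)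
    with hc
  refine mem_interior.2 ⟨⋂ i : Fin n, {y : Fin n → ℝ | 1 ≤ (i:ℕ) → |y i| < c i * |y ⟨0, h0⟩|},
    ?_, ?_, ?_⟩
  · intro y hy
    simp only [Set.mem_iInter, Set.mem_setOf_eq] at hy
    have hy0 : y ⟨0, h0⟩ ≠ 0 := by
      intro h
      have h1 := hy ⟨1, by omega⟩ (by norm_num)
      rw [h, abs_zero, mul_zero] at h1
      exact (abs_nonneg _).not_gt h1
    refine ⟨y ⟨0, h0⟩, (y ⟨0, h0⟩)⁻¹ • y, ?_, ?_, ?_⟩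
    · intro i hi
      have hieq : i = ⟨0, h0⟩ := Fin.ext hi
      rw [hieq, Pi.smul_apply, smul_eq_mul, inv_mul_cancel₀ hy0]
    · intro i hi
      have h1 := (hy i hi).le
      rw [Pi.smul_apply, smul_eq_mul, abs_mul, abs_inv]
      have hyabs : 0 < |y ⟨0, h0⟩| := abs_pos.2 hy0
      rw [inv_mul_le_iff₀ hyabs]
      calc |y i| ≤ c i * |y ⟨0, h0⟩| := h1
        _ = |y ⟨0, h0⟩| *
            ((min α β - 1) / 2 * ((n - 1).choose ((i : ℕ) - 1) : ℝ) * r ^ ((i : ℕ) - 1)) := by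
            simp only [hc]; ring
    · funext j
      rw [Pi.smul_apply, Pi.smul_apply, smul_eq_mul, smul_eq_mul, ← mul_assoc,
        mul_inv_cancel₀ hy0, one_mul]
  · apply isOpen_iInter_of_finite
    intro i
    by_cases hi : 1 ≤ (i:ℕ)
    · have : {y : Fin n → ℝ | 1 ≤ (i:ℕ) → |y i| < c i * |y ⟨0, h0⟩|} =
          {y : Fin n → ℝ | |y i| < c i * |y ⟨0, h0⟩|} := by
        ext y; simp [hi]
      rw [this]
      exact isOpen_lt ((continuous_apply i).abs)
        (continuous_const.mul ((continuous_apply (⟨0, h0⟩ : Fin n)).abs))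
    · have : {y : Fin n → ℝ | 1 ≤ (i:ℕ) → |y i| < c i * |y ⟨0, h0⟩|} = Set.univ := by
        ext y; simp [hi]
      rw [this]
      exact isOpen_univ
  · simp only [Set.mem_iInter, Set.mem_setOf_eq]
    intro i hi
    have := hx i hi
    rw [hc]
    exact this



open Matrix in
/-- Under Assumption (A), `r(n−1) < (3/7)(1 − 1/α)`, `r(n−1) < (3/7)(1 − 1/β)`, and
`r(n−1) ≤ 1/10`, the cone `Ψ` is contracting-invariant for `{A_L, A_R}`:
`A v ∈ int(Ψ) ∪ {0}` for every `v ∈ Ψ` and `A ∈ {A_L, A_R}`. -/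
theorem stmt_16 (n : ℕ) (hn : 2 ≤ n) (aL aR : Fin n → ℝ) (α β r : ℝ)
    (hA : assumptionA n aL aR α β r)
    (h1 : r * ((n : ℝ) - 1) < 3 / 7 * (1 - 1 / α))
    (h2 : r * ((n : ℝ) - 1) < 3 / 7 * (1 - 1 / β))
    (h3 : r * ((n : ℝ) - 1) ≤ 1 / 10) :
    ∀ v ∈ PsiSet n α β r,
      (bcMat n aL).mulVec v ∈ interior (PsiSet n α β r) ∪ {0} ∧
      (bcMat n aR).mulVec v ∈ interior (PsiSet n α β r) ∪ {0} := by
  obtain ⟨hα, hβ, hr, hr1, hsL, hsR⟩ := hA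
  have hm1 : 1 < min α β := lt_min hα hβ
  have htm : r * ((n:ℝ) - 1) < 3/7 * (1 - 1/(min α β)) := by
    rcases min_cases α β with ⟨h, _⟩ | ⟨h, _⟩ <;> rw [h]
    · exact h1
    · exact h2
  intro v hv
  obtain ⟨γ, w, hw0, hwb, rfl⟩ := hv
  rcases eq_or_ne γ 0 with rfl | hγ
  · constructor <;> exact Or.inr (by rw [zero_smul, Matrix.mulVec_zero]; rfl)
  · have hγpos : 0 < |γ| := abs_pos.2 hγ
    have key : ∀ (a : Fin n → ℝ) (ρ : ℝ), specA n (bcMat n a) ρ r → min α β ≤ |ρ| →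
        (bcMat n a).mulVec (γ • w) ∈ interior (PsiSet n α β r) := by
      intro a ρ hspec hmρ
      have hstep := cone_step n hn a ρ r (min α β) hr hm1 hmρ hspec htm w hw0 hwb
      rw [Matrix.mulVec_smul]
      apply mem_interior_PsiSet n hn α β r
      intro i hi
      rw [Pi.smul_apply, smul_eq_mul, abs_mul, Pi.smul_apply, smul_eq_mul, abs_mul]
      have hst := hstep.2 i hi
      calc |γ| * |(bcMat n a).mulVec w i|
          < |γ| * ((min α β - 1)/2 * (((n-1).choose ((i:ℕ)-1)) : ℝ) * r^((i:ℕ)-1) *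
            |(bcMat n a).mulVec w ⟨0, by omega⟩|) := by
            exact mul_lt_mul_of_pos_left hst hγpos
        _ = (min α β - 1)/2 * (((n-1).choose ((i:ℕ)-1)) : ℝ) * r^((i:ℕ)-1) *
            (|γ| * |(bcMat n a).mulVec w ⟨0, by omega⟩|) := by ring
    refine ⟨Or.inl (key aL α hsL ?_), Or.inl (key aR (-β) hsR ?_)⟩
    · rw [abs_of_pos (by linarith)]
      exact min_le_left _ _
    · rw [abs_neg, abs_of_pos (by linarith)]
      exact min_le_right _ _
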